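/- arXiv:1701.02135 — 3 statements merged into one kernel-verified Lean document; each statement's English description precedes it below -/
import Mathlib

section
/- Let k = 𝔽_q with q odd, let V be a finite-dimensional k-vector space, Q : V → k a quadratic form, and l : V → k a linear functional. Define Q^⊥ = {v ∈ V | Q(v + v') = Q(v') for all v' ∈ V}. If the restriction of l to Q^⊥ is nonzero, then ∑_{v ∈ V} ψ(Q(v) + l(v)) = 0 for any nontrivial additive character ψ : k → ℂ*. -/
/-- if the restriction of the linear functional `l` to the radical
`Q^⊥ = {v | ∀ v', Q(v+v') = Q(v')}` of the quadratic form `Q` is nonzero, then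
`∑_{v ∈ V} ψ(Q(v) + l(v)) = 0`. -/
theorem sum_psi_quad_add_lin_eq_zero (k : Type*) [Field k] [Fintype k]
    (hodd : Odd (Fintype.card k))
    (V : Type*) [AddCommGroup V] [Module k V] [FiniteDimensional k V] [Fintype V]
    (Q : QuadraticForm k V) (l : V →ₗ[k] k)
    (ψ : AddChar k ℂ) (hψ : ψ ≠ 1)
    (hl : ∃ v, (∀ v' : V, Q (v + v') = Q v') ∧ l v ≠ 0) :
    ∑ v : V, ψ (Q v + l v) = 0 := by
  obtain ⟨v₀, hrad, hlv⟩ := hl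
  obtain ⟨t, ht⟩ := AddChar.ne_one_iff.mp hψ
  have hQ0 : Q v₀ = 0 := by simpa using hrad 0
  have hpolar : ∀ v', QuadraticMap.polar Q v₀ v' = 0 := by
    intro v'
    have h := hrad v'
    simp only [QuadraticMap.polar, h, hQ0]
    ring
  set c : k := t / l v₀ with hc
  have hct : c * l v₀ = t := div_mul_cancel₀ t hlv
  have hQ : ∀ v : V, Q (v + c • v₀) = Q v := by
    intro v
    have h1 : Q (v + c • v₀) = Q v + Q (c • v₀) + QuadraticMap.polar Q v (c • v₀) := by
      simp [QuadraticMap.polar]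
    rw [h1, QuadraticMap.map_smul, QuadraticMap.polar_comm, QuadraticMap.polar_smul_left,
      hpolar, hQ0]
    simp
  have hS : ∑ v : V, ψ (Q v + l v) = (∑ v : V, ψ (Q v + l v)) * ψ t := by
    conv_lhs => rw [← Equiv.sum_comp (Equiv.addRight (c • v₀)) (fun v => ψ (Q v + l v))]
    rw [Finset.sum_mul]
    refine Finset.sum_congr rfl fun v _ => ?_
    simp only [Equiv.coe_addRight, hQ, map_add, map_smul, smul_eq_mul, hct]
    rw [show Q v + (l v + t) = (Q v + l v) + t by ring, AddChar.map_add_eq_mul]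
  have hne : (1 : ℂ) - ψ t ≠ 0 := sub_ne_zero.mpr (Ne.symm ht)
  have : (∑ v : V, ψ (Q v + l v)) * (1 - ψ t) = 0 := by
    rw [mul_sub, mul_one, ← hS, sub_self]
  exact (mul_eq_zero.mp this).resolve_right hne
end

section
/- Let k = 𝔽_q with q odd, ψ a nontrivial additive character, t ≥ 0, α ∈ k*, and let P : k^{2t+1} → k be P(x) = ∑_{i=1}^t x_i x_{i+t} + α x_{2t+1}². Then |∑_{v ∈ k^{2t+1}} ψ(P(v))| = q^{t + 1/2}. -/
private lemma addchar_map_sum {k : Type*} [AddCommMonoid k] {ι : Type*}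
    (ψ : AddChar k ℂ) (s : Finset ι) (f : ι → k) :
    ψ (∑ i ∈ s, f i) = ∏ i ∈ s, ψ (f i) := by
  induction s using Finset.cons_induction with
  | empty => simp
  | cons i s hi ih => rw [Finset.sum_cons, Finset.prod_cons, AddChar.map_add_eq_mul, ih]

/-- for `P(x,y,z) = ∑ᵢ xᵢyᵢ + αz²` on `k^{2t+1}`,
`|∑_v ψ(P(v))| = q^{t+1/2}`. -/
theorem abs_sum_psi_odd_rank_quadratic (k : Type*) [Field k] [Fintype k]
    (hodd : Odd (Fintype.card k))
    (ψ : AddChar k ℂ) (hψ : ∃ a : k, ψ a ≠ 1) (t : ℕ) (α : k) (hα : α ≠ 0) :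
    ‖∑ v : (Fin t → k) × (Fin t → k) × k,
        ψ ((∑ i : Fin t, v.1 i * v.2.1 i) + α * v.2.2 ^ 2)‖
      = (Fintype.card k : ℝ) ^ t * Real.sqrt (Fintype.card k) := by
  classical
  have hprim : ψ.IsPrimitive := AddChar.IsPrimitive.of_ne_one (by rintro rfl; obtain ⟨a, ha⟩ := hψ; exact ha (AddChar.one_apply a))
  have hp : 0 < ringChar k :=
    Nat.pos_of_ne_zero (CharP.ringChar_ne_zero_of_finite k)
  have h2 : (2 : k) ≠ 0 := by
    intro h
    have hchar : ringChar k = 2 := CharP.ringChar_of_prime_eq_zero Nat.prime_two h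
    have := FiniteField.even_card_iff_char_two.mp hchar
    obtain ⟨m, hm⟩ := hodd
    omega
  -- split the sum
  have hsplit : (∑ v : (Fin t → k) × (Fin t → k) × k,
        ψ ((∑ i : Fin t, v.1 i * v.2.1 i) + α * v.2.2 ^ 2)) =
      (∑ x : Fin t → k, ∑ y : Fin t → k, ψ (∑ i : Fin t, x i * y i)) *
        (∑ z : k, ψ (α * z ^ 2)) := by
    rw [Fintype.sum_prod_type]
    simp_rw [Fintype.sum_prod_type, AddChar.map_add_eq_mul, ← Finset.mul_sum,
      ← Finset.sum_mul]
  -- the hyperbolic part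
  have hA : (∑ x : Fin t → k, ∑ y : Fin t → k, ψ (∑ i : Fin t, x i * y i))
      = (Fintype.card k : ℂ) ^ t := by
    have hinner : ∀ x : Fin t → k, (∑ y : Fin t → k, ψ (∑ i : Fin t, x i * y i))
        = ∏ i : Fin t, (if x i = 0 then (Fintype.card k : ℂ) else 0) := by
      intro x
      calc (∑ y : Fin t → k, ψ (∑ i : Fin t, x i * y i))
          = ∑ y : Fin t → k, ∏ i : Fin t, ψ (x i * y i) := by
            refine Finset.sum_congr rfl fun y _ => ?_
            rw [addchar_map_sum]
        _ = ∏ i : Fin t, ∑ a : k, ψ (x i * a) :=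
            (Fintype.prod_sum (fun i a => ψ (x i * a))).symm
        _ = ∏ i : Fin t, (if x i = 0 then (Fintype.card k : ℂ) else 0) := by
            refine Finset.prod_congr rfl fun i _ => ?_
            simp_rw [mul_comm (x i)]
            rw [AddChar.sum_mulShift _ hprim]
            split <;> simp
    simp_rw [hinner]
    rw [Finset.sum_eq_single (0 : Fin t → k)]
    · simp
    · intro x _ hx
      obtain ⟨i, hi⟩ := Function.ne_iff.mp hx
      exact Finset.prod_eq_zero (Finset.mem_univ i) (by simp only [Pi.zero_apply] at hi; simp [hi])
    · simp
  -- the Gauss sum part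
  set S : ℂ := ∑ z : k, ψ (α * z ^ 2) with hS
  have hconj : (starRingEnd ℂ) S = ∑ w : k, ψ (-(α * w ^ 2)) := by
    rw [hS, map_sum]
    refine Finset.sum_congr rfl fun w _ => ?_
    rw [AddChar.starComp_apply hp, AddChar.inv_apply]
  have key : S * (starRingEnd ℂ) S = (Fintype.card k : ℂ) := by
    rw [hconj, hS, Finset.sum_mul_sum]
    simp_rw [← AddChar.map_add_eq_mul]
    rw [Finset.sum_comm]
    have hrow : ∀ w : k, (∑ z : k, ψ (α * z ^ 2 + -(α * w ^ 2)))
        = ∑ u : k, ψ (α * u ^ 2) * ψ (w * (2 * α * u)) := by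
      intro w
      rw [← Equiv.sum_comp (Equiv.addLeft w)
        (fun z => ψ (α * z ^ 2 + -(α * w ^ 2)))]
      refine Finset.sum_congr rfl fun u _ => ?_
      rw [← AddChar.map_add_eq_mul]
      congr 1
      simp only [Equiv.coe_addLeft]
      ring
    simp_rw [hrow]
    rw [Finset.sum_comm]
    simp_rw [← Finset.mul_sum]
    have hinner : ∀ u : k, (∑ w : k, ψ (w * (2 * α * u)))
        = if u = 0 then (Fintype.card k : ℂ) else 0 := by
      intro u
      rw [AddChar.sum_mulShift _ hprim]
      have : 2 * α * u = 0 ↔ u = 0 := by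
        constructor
        · intro h
          rcases mul_eq_zero.mp h with h' | h'
          · exact absurd h' (mul_ne_zero h2 hα)
          · exact h'
        · intro h; rw [h, mul_zero]
      simp [this]
    simp_rw [hinner]
    rw [Finset.sum_eq_single (0 : k)]
    · simp
    · intro u _ hu; simp [hu]
    · simp
  have habsS : ‖S‖ = Real.sqrt (Fintype.card k) := by
    have h1 : (Complex.normSq S : ℂ) = (Fintype.card k : ℂ) := by
      rw [← Complex.mul_conj]; exact key
    have h2' : Complex.normSq S = (Fintype.card k : ℝ) := by exact_mod_cast h1
    rw [Complex.norm_def, h2']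
  rw [hsplit, norm_mul, hA, habsS, norm_pow, Complex.norm_natCast]
end

section
/- Let k = 𝔽_q with q odd, V a finite-dimensional k-vector space, Q : V → k a quadratic form whose radical Q^⊥ has codimension r in V, and ψ a nontrivial additive character on k. Then |∑_{v ∈ V} ψ(Q(v))| ≥ q^{dim V - r}. -/
/-- if the radical `W = Q^⊥` of the quadratic form `Q` has
codimension `r` in `V`, then `|∑_{v∈V} ψ(Q(v))| ≥ q^{dim V - r}`. -/
theorem abs_sum_psi_quad_ge (k : Type*) [Field k] [Fintype k]
    (hodd : Odd (Fintype.card k))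
    (V : Type*) [AddCommGroup V] [Module k V] [FiniteDimensional k V] [Fintype V]
    (Q : QuadraticForm k V) (ψ : AddChar k ℂ) (hψ : ∃ a : k, ψ a ≠ 1)
    (W : Submodule k V) (hW : ∀ v : V, v ∈ W ↔ ∀ v' : V, Q (v + v') = Q v')
    (r : ℕ) (hr : Module.finrank k V - Module.finrank k W = r) :
    ‖(∑ v : V, ψ (Q v))‖
      ≥ (Fintype.card k : ℝ) ^ (Module.finrank k V - r) := by
  classical
  have h2 : (2 : k) ≠ 0 := by
    refine Ring.two_ne_zero ?_
    intro hchar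
    have := FiniteField.even_card_iff_char_two.mp hchar
    rw [Nat.odd_iff] at hodd
    omega
  -- membership in W in terms of the polar form
  have hWpolar : ∀ h : V, h ∈ W ↔ ∀ v : V, QuadraticMap.polar Q v h = 0 := by
    intro h
    constructor
    · intro hh v
      have h0 : Q h = 0 := by simpa using (hW h).1 hh 0
      have h1 : Q (h + v) = Q v := (hW h).1 hh v
      simp [QuadraticMap.polar, add_comm v h, h1, h0]
    · intro hp
      have hQh : Q h = 0 := by
        have hph : QuadraticMap.polar Q h h = 0 := hp h
        have h4 : Q ((2 : k) • h) = (2 * 2) * Q h := by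
          simpa [smul_eq_mul] using QuadraticMap.map_smul Q (2 : k) h
        have hhh : Q (h + h) = Q h + Q h := by
          have := hp h
          simp [QuadraticMap.polar] at this
          linear_combination this
        rw [two_smul, hhh] at h4
        have : (2 : k) * Q h = 0 := by ring_nf; ring_nf at h4; linear_combination -h4
        rcases mul_eq_zero.mp this with h' | h'
        · exact absurd h' h2
        · exact h'
      refine (hW h).2 ?_
      intro v'
      have := hp v'
      simp [QuadraticMap.polar, add_comm v' h, hQh] at this
      linear_combination this
  have hQW : ∀ h : V, h ∈ W → Q h = 0 := fun h hh => by simpa using (hW h).1 hh 0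
  set S : ℂ := ∑ v : V, ψ (Q v) with hS
  -- the character attached to h
  set e : V → AddChar V ℂ := fun h => ψ.compAddMonoidHom (Q.polarBilin.flip h).toAddMonoidHom
    with he
  have he_apply : ∀ h w : V, e h w = ψ (QuadraticMap.polar Q w h) := fun h w => rfl
  have he_zero : ∀ h : V, e h = 0 ↔ h ∈ W := by
    intro h
    constructor
    · intro h0
      refine (hWpolar h).2 ?_
      intro v
      by_contra hc
      obtain ⟨a, ha⟩ := hψ
      have : e h ((a / QuadraticMap.polar Q v h) • v) = ψ a := by
        rw [he_apply]
        congr 1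
        rw [QuadraticMap.polar_smul_left, smul_eq_mul, div_mul_cancel₀ _ hc]
      rw [h0] at this
      simp at this
      exact ha this.symm
    · intro hh
      ext w
      rw [he_apply, (hWpolar h).1 hh w]
      simp
  -- main computation : conj S * S = card V * card W
  have key : (starRingEnd ℂ) S * S = (Fintype.card V : ℂ) * (Fintype.card W : ℂ) := by
    have hconj : (starRingEnd ℂ) S = ∑ w : V, ψ (-(Q w)) := by
      rw [hS, map_sum]
      exact Finset.sum_congr rfl fun w _ => (AddChar.map_neg_eq_conj ψ (Q w)).symm
    rw [hconj, hS, Finset.sum_mul_sum]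
    have step1 : ∀ w : V, ∑ v : V, ψ (-(Q w)) * ψ (Q v)
        = ∑ h : V, e h w * ψ (Q h) := by
      intro w
      have := Fintype.sum_equiv (Equiv.addLeft w)
        (fun h : V => ψ (-(Q w)) * ψ (Q (w + h)))
        (fun v : V => ψ (-(Q w)) * ψ (Q v)) (fun h => rfl)
      rw [← this]
      refine Finset.sum_congr rfl fun h _ => ?_
      show ψ (-(Q w)) * ψ (Q (w + h)) = e h w * ψ (Q h)
      rw [he_apply, ← AddChar.map_add_eq_mul, ← AddChar.map_add_eq_mul]
      congr 1
      simp [QuadraticMap.polar]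
      ring
    calc ∑ w : V, ∑ v : V, ψ (-(Q w)) * ψ (Q v)
        = ∑ w : V, ∑ h : V, e h w * ψ (Q h) := Finset.sum_congr rfl fun w _ => step1 w
      _ = ∑ h : V, (∑ w : V, e h w) * ψ (Q h) := by
          rw [Finset.sum_comm]; simp [Finset.sum_mul]
      _ = ∑ h : V, (if h ∈ W then (Fintype.card V : ℂ) else 0) * ψ (Q h) := by
          refine Finset.sum_congr rfl fun h _ => ?_
          rw [AddChar.sum_eq_ite (e h)]
          congr 1
          simp [he_zero h]
      _ = ∑ h : V, (if h ∈ W then (Fintype.card V : ℂ) else 0) := by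
          refine Finset.sum_congr rfl fun h _ => ?_
          split_ifs with hh
          · rw [hQW h hh]; simp
          · simp
      _ = (Fintype.card V : ℂ) * (Fintype.card W : ℂ) := by
          rw [Finset.sum_ite, Finset.sum_const, Finset.sum_const_zero, add_zero,
            nsmul_eq_mul, mul_comm]
          congr 1
          rw [Fintype.card_subtype]
  -- turn into a statement about abs
  have habs : ‖S‖ ^ 2
      = (Fintype.card V : ℝ) * (Fintype.card W : ℝ) := by
    have h1 : ((Complex.normSq S : ℝ) : ℂ) = ((Fintype.card V * Fintype.card W : ℝ) : ℂ) := by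
      rw [← Complex.mul_conj, mul_comm, key]
      push_cast
      ring
    have h2 := Complex.ofReal_injective h1
    rw [Complex.sq_norm, h2]
  have hcV : (Fintype.card V : ℝ) = (Fintype.card k : ℝ) ^ Module.finrank k V := by
    rw [Module.card_eq_pow_finrank (K := k) (V := V)]; push_cast; ring
  have hcW : (Fintype.card W : ℝ) = (Fintype.card k : ℝ) ^ Module.finrank k W := by
    rw [Module.card_eq_pow_finrank (K := k) (V := W)]; push_cast; ring
  have hle : Module.finrank k W ≤ Module.finrank k V := Submodule.finrank_le W
  have hdim : Module.finrank k V - r = Module.finrank k W := by omega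
  rw [hdim]
  have hq1 : (1 : ℝ) ≤ (Fintype.card k : ℝ) := by
    exact_mod_cast Fintype.card_pos
  have hsq : ((Fintype.card k : ℝ) ^ Module.finrank k W) ^ 2 ≤ ‖S‖ ^ 2 := by
    rw [habs, hcV, hcW, ← pow_mul, ← pow_add]
    exact pow_le_pow_right₀ hq1 (by omega)
  have ht : (0 : ℝ) ≤ (Fintype.card k : ℝ) ^ Module.finrank k W := by positivity
  nlinarith [norm_nonneg S]
end
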